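/- arXiv:2603.00748 — 6 statements merged into one kernel-verified Lean document; each statement's English description precedes it below -/
import Mathlib

section
/- Let h : ℝ → ℝ be continuous with h(0) = 0, concave on (0, δ) for some δ > 0, and let H(t) = ∫₀ᵗ h(s) ds. Then for any nonnegative reals x₁, x₂ with x₁ + x₂ < δ, one has H(x₁ + x₂) − H(x₁) − H(x₂) − h(x₁)·x₂ ≤ 0. -/
/-- For a concave function on `(0, δ)` that is continuous with `h 0 = 0`,
we have `a/(a+b) * h (a+b) ≤ h a`. -/
lemma aux_frac (h : ℝ → ℝ) (δ : ℝ) (hcont : Continuous h) (h0 : h 0 = 0)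
    (hconc : ConcaveOn ℝ (Set.Ioo 0 δ) h) {a b : ℝ} (ha : 0 < a) (hb : 0 < b)
    (hab : a + b < δ) : a / (a + b) * h (a + b) ≤ h a := by
  have habp : 0 < a + b := by linarith
  have hmem2 : a + b ∈ Set.Ioo (0:ℝ) δ := ⟨habp, hab⟩
  have hev : ∀ ε ∈ Set.Ioo (0:ℝ) a,
      b / (a + b - ε) * h ε + (a - ε) / (a + b - ε) * h (a + b) ≤ h a := by
    intro ε hε
    obtain ⟨hε0, hεa⟩ := hε
    have hd : 0 < a + b - ε := by linarith
    have hmem1 : ε ∈ Set.Ioo (0:ℝ) δ := ⟨hε0, by linarith⟩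
    have h1 : b / (a + b - ε) * h ε + (a - ε) / (a + b - ε) * h (a + b)
        ≤ h (b / (a + b - ε) * ε + (a - ε) / (a + b - ε) * (a + b)) := by
      have := hconc.2 hmem1 hmem2
        (show (0:ℝ) ≤ b / (a + b - ε) from div_nonneg hb.le hd.le)
        (show (0:ℝ) ≤ (a - ε) / (a + b - ε) from div_nonneg (by linarith) hd.le)
        (show b / (a + b - ε) + (a - ε) / (a + b - ε) = 1 by
          rw [← add_div, div_eq_one_iff_eq hd.ne']; ring)
      simpa using this
    have harg : b / (a + b - ε) * ε + (a - ε) / (a + b - ε) * (a + b) = a := by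
      field_simp; ring
    rwa [harg] at h1
  have hten : Filter.Tendsto
      (fun ε => b / (a + b - ε) * h ε + (a - ε) / (a + b - ε) * h (a + b))
      (nhdsWithin 0 (Set.Ioi 0)) (nhds (a / (a + b) * h (a + b))) := by
    have hc : ContinuousAt
        (fun ε => b / (a + b - ε) * h ε + (a - ε) / (a + b - ε) * h (a + b)) 0 := by
      apply ContinuousAt.add
      · exact (ContinuousAt.div continuousAt_const (by fun_prop)
          (by simpa using habp.ne')).mul hcont.continuousAt
      · exact ContinuousAt.mul (ContinuousAt.div (by fun_prop) (by fun_prop)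
          (by simpa using habp.ne')) continuousAt_const
    have := hc.tendsto.mono_left (nhdsWithin_le_nhds (s := Set.Ioi (0:ℝ)))
    simpa [h0] using this
  refine le_of_tendsto hten ?_
  filter_upwards [Ioo_mem_nhdsGT_of_mem ⟨le_refl 0, ha⟩] with ε hε using hev ε hε

/-- Subadditivity of `h`. -/
lemma aux_subadd (h : ℝ → ℝ) (δ : ℝ) (hcont : Continuous h) (h0 : h 0 = 0)
    (hconc : ConcaveOn ℝ (Set.Ioo 0 δ) h) {a b : ℝ} (ha : 0 ≤ a) (hb : 0 ≤ b)
    (hab : a + b < δ) : h (a + b) ≤ h a + h b := by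
  rcases eq_or_lt_of_le ha with rfl | ha'
  · simp [h0]
  rcases eq_or_lt_of_le hb with rfl | hb'
  · simp [h0]
  have habp : 0 < a + b := by linarith
  have h1 := aux_frac h δ hcont h0 hconc ha' hb' hab
  have h2 := aux_frac h δ hcont h0 hconc hb' ha' (by linarith)
  rw [add_comm b a] at h2
  have key : a / (a + b) + b / (a + b) = 1 := by field_simp
  have hsum' : (a / (a + b) + b / (a + b)) * h (a + b) ≤ h a + h b := by
    rw [add_mul]; linarith
  rw [key, one_mul] at hsum'
  exact hsum' 

/-- Base case of the tail-concavity lemma (Lemma 4.1, M = 2). -/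
theorem stmt_0 (h : ℝ → ℝ) (δ : ℝ) (hδ : 0 < δ)
    (hcont : Continuous h) (h0 : h 0 = 0)
    (hconc : ConcaveOn ℝ (Set.Ioo 0 δ) h)
    (H : ℝ → ℝ) (hH : ∀ t, H t = ∫ s in (0:ℝ)..t, h s)
    (x₁ x₂ : ℝ) (hx₁ : 0 ≤ x₁) (hx₂ : 0 ≤ x₂) (hsum : x₁ + x₂ < δ) :
    H (x₁ + x₂) - H x₁ - H x₂ - h x₁ * x₂ ≤ 0 := by
  have hint : ∀ a b : ℝ, IntervalIntegrable h MeasureTheory.volume a b :=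
    fun a b => hcont.intervalIntegrable a b
  have hint' : IntervalIntegrable (fun s => h (s + x₁)) MeasureTheory.volume 0 x₂ :=
    (hcont.comp (continuous_id.add continuous_const)).intervalIntegrable 0 x₂
  have key1 : H (x₁ + x₂) - H x₁ = ∫ s in x₁..(x₁ + x₂), h s := by
    rw [hH, hH, ← intervalIntegral.integral_add_adjacent_intervals (hint 0 x₁)
      (hint x₁ (x₁ + x₂))]
    ring
  have key2 : (∫ s in x₁..(x₁ + x₂), h s) = ∫ s in (0:ℝ)..x₂, h (s + x₁) := by
    rw [intervalIntegral.integral_comp_add_right, zero_add, add_comm x₂ x₁]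
  have key3 : (∫ s in (0:ℝ)..x₂, (h (s + x₁) - h s - h x₁))
      = (∫ s in (0:ℝ)..x₂, h (s + x₁)) - H x₂ - h x₁ * x₂ := by
    have i1 : IntervalIntegrable (fun s => h (s + x₁) - h s) MeasureTheory.volume 0 x₂ :=
      hint'.sub (hint 0 x₂)
    rw [hH, intervalIntegral.integral_sub i1 (intervalIntegrable_const (c := h x₁)),
      intervalIntegral.integral_sub hint' (hint 0 x₂),
      intervalIntegral.integral_const, sub_zero, smul_eq_mul]
    ring
  have main : (∫ s in (0:ℝ)..x₂, (h (s + x₁) - h s - h x₁)) ≤ 0 := by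
    have hn : 0 ≤ ∫ s in (0:ℝ)..x₂, -(h (s + x₁) - h s - h x₁) := by
      apply intervalIntegral.integral_nonneg hx₂
      intro u hu
      have h1 : h (u + x₁) ≤ h u + h x₁ :=
        aux_subadd h δ hcont h0 hconc hu.1 hx₁ (by nlinarith [hu.2])
      linarith
    rw [intervalIntegral.integral_neg] at hn
    linarith
  calc H (x₁ + x₂) - H x₁ - H x₂ - h x₁ * x₂
      = (∫ s in (0:ℝ)..x₂, (h (s + x₁) - h s - h x₁)) := by
        rw [key3, ← key2, ← key1]
    _ ≤ 0 := main
end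

section
/- For any finite set P = {x₁, …, x_M} of M ≥ 2 distinct points in ℝⁿ, there exist a constant D = D(M) > 0 (depending only on M, not on the points), a point y ∈ P, and a unit vector e ∈ Sⁿ⁻¹ such that (xᵢ − y) · e ≥ (1/D) |xᵢ − y| for every xᵢ ∈ P \ {y}. -/
open Finset in
/-- For any finite set `F` of vectors there is a unit vector `e` that is quantitatively
non-orthogonal to every member of `F`, with constant depending only on `F.card`. -/
lemma exists_good_dir {E : Type*} [NormedAddCommGroup E] [InnerProductSpace ℝ E]
    (e₀ : E) (he₀ : ‖e₀‖ = 1) (F : Finset E) :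
    ∃ e : E, ‖e‖ = 1 ∧ ∀ v ∈ F, (1/3 : ℝ) ^ F.card * ‖v‖ ≤ |(inner ℝ v e : ℝ)| := by
  classical
  induction F using Finset.induction_on with
  | empty => exact ⟨e₀, he₀, by simp⟩
  | @insert u F hu ih =>
    obtain ⟨e, he, hF⟩ := ih
    set c : ℝ := (1/3 : ℝ) ^ F.card with hc
    have hc0 : 0 < c := by positivity
    have hc1 : c ≤ 1 := by
      apply pow_le_one₀ <;> norm_num
    have hcard : (insert u F).card = F.card + 1 := Finset.card_insert_of_notMem hu
    by_cases hu0 : u = 0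
    · refine ⟨e, he, ?_⟩
      intro v hv
      rcases Finset.mem_insert.1 hv with rfl | hv
      · simp [hu0]
      · calc (1/3 : ℝ) ^ (insert u F).card * ‖v‖
            ≤ (1/3 : ℝ) ^ F.card * ‖v‖ := by
              apply mul_le_mul_of_nonneg_right _ (norm_nonneg v)
              apply pow_le_pow_of_le_one (by norm_num) (by norm_num)
              omega
          _ ≤ |(inner ℝ v e : ℝ)| := hF v hv
    · -- tilt `e` slightly in the direction of `u`
      set t : ℝ := c / 2 with ht
      have ht0 : 0 < t := by positivity
      have ht1 : t ≤ 1/2 := by rw [ht]; linarith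
      set w : E := ‖u‖⁻¹ • u with hw
      have hwn : ‖w‖ = 1 := norm_smul_inv_norm hu0
      set s : ℝ := (if 0 ≤ (inner ℝ w e : ℝ) then (1:ℝ) else -1) with hs
      set e'' : E := e + (s * t) • w with he''
      have hinn : (inner ℝ w e'' : ℝ) = (inner ℝ w e : ℝ) + s * t := by
        rw [he'', inner_add_right, real_inner_smul_right, real_inner_self_eq_norm_sq, hwn]
        ring
      have habs : t ≤ |(inner ℝ w e'' : ℝ)| := by
        rw [hinn, hs]
        by_cases h : 0 ≤ (inner ℝ w e : ℝ)
        · rw [if_pos h]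
          have : t ≤ (inner ℝ w e : ℝ) + 1 * t := by linarith
          calc t ≤ (inner ℝ w e : ℝ) + 1 * t := this
            _ ≤ |(inner ℝ w e : ℝ) + 1 * t| := le_abs_self _
        · rw [if_neg h]
          push_neg at h
          have h1 : (inner ℝ w e : ℝ) + (-1) * t ≤ -t := by linarith
          calc t ≤ -((inner ℝ w e : ℝ) + (-1) * t) := by linarith
            _ ≤ |(inner ℝ w e : ℝ) + (-1) * t| := neg_le_abs _
      have hst : |s * t| = t := by
        rw [abs_mul, hs]
        by_cases h : 0 ≤ (inner ℝ w e : ℝ) <;> simp [h, abs_of_pos ht0]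
      -- lower bound for old vectors against e''
      have hFe'' : ∀ v ∈ F, t * ‖v‖ ≤ |(inner ℝ v e'' : ℝ)| := by
        intro v hv
        have h1 : (inner ℝ v e'' : ℝ) = (inner ℝ v e : ℝ) + (s * t) * (inner ℝ v w : ℝ) := by
          rw [he'', inner_add_right, real_inner_smul_right]
        have h2 : |(s * t) * (inner ℝ v w : ℝ)| ≤ t * ‖v‖ := by
          rw [abs_mul, hst]
          apply mul_le_mul_of_nonneg_left _ (le_of_lt ht0)
          calc |(inner ℝ v w : ℝ)| ≤ ‖v‖ * ‖w‖ := abs_real_inner_le_norm v w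
            _ = ‖v‖ := by rw [hwn, mul_one]
        have h3 := hF v hv
        have h4 : |(inner ℝ v e : ℝ)| - |(s * t) * (inner ℝ v w : ℝ)|
            ≤ |(inner ℝ v e : ℝ) + (s * t) * (inner ℝ v w : ℝ)| := by
          have h5 := abs_add_le ((inner ℝ v e : ℝ) + (s * t) * (inner ℝ v w : ℝ))
            (-((s * t) * (inner ℝ v w : ℝ)))
          simp only [add_neg_cancel_right, abs_neg] at h5
          linarith
        have hct : c * ‖v‖ - t * ‖v‖ = t * ‖v‖ := by rw [ht]; ring
        rw [h1]
        linarith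
      -- norm bounds for e''
      have hnorm_le : ‖e''‖ ≤ 3/2 := by
        calc ‖e''‖ ≤ ‖e‖ + ‖(s * t) • w‖ := norm_add_le _ _
          _ = 1 + t := by rw [he, norm_smul, hwn, mul_one, Real.norm_eq_abs, hst]
          _ ≤ 3/2 := by linarith
      have hnorm_ge : 1/2 ≤ ‖e''‖ := by
        have h1 := norm_sub_norm_le e e''
        have h2 : e - e'' = -((s * t) • w) := by rw [he'']; abel
        rw [h2, norm_neg, norm_smul, hwn, mul_one, Real.norm_eq_abs, hst, he] at h1
        linarith
      have he''0 : e'' ≠ 0 := by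
        intro h
        rw [h, norm_zero] at hnorm_ge
        linarith
      set e' : E := ‖e''‖⁻¹ • e'' with he'
      have he'n : ‖e'‖ = 1 := norm_smul_inv_norm he''0
      have hkey : ∀ v : E, |(inner ℝ v e' : ℝ)| = ‖e''‖⁻¹ * |(inner ℝ v e'' : ℝ)| := by
        intro v
        rw [he', real_inner_smul_right, abs_mul, abs_of_pos (by positivity)]
      have hinv : (2/3 : ℝ) ≤ ‖e''‖⁻¹ := by
        have h := one_div_le_one_div_of_le (by linarith : (0:ℝ) < ‖e''‖) hnorm_le
        calc (2/3 : ℝ) = 1 / (3/2 : ℝ) := by norm_num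
          _ ≤ 1 / ‖e''‖ := h
          _ = ‖e''‖⁻¹ := one_div _
      refine ⟨e', he'n, ?_⟩
      intro v hv
      have hgoal : (1/3 : ℝ) ^ (insert u F).card = c / 3 := by
        rw [hcard, hc, pow_succ]; ring
      rcases Finset.mem_insert.1 hv with rfl | hvF
      · -- v = u
        have hvu : v = ‖v‖ • w := by
          rw [hw, smul_smul, mul_inv_cancel₀ (norm_ne_zero_iff.2 hu0), one_smul]
        have h1 : |(inner ℝ v e' : ℝ)| = ‖v‖ * |(inner ℝ w e' : ℝ)| := by
          conv_lhs => rw [hvu]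
          rw [real_inner_smul_left, abs_mul, abs_of_nonneg (norm_nonneg v)]
        have h2 : t * (2/3) ≤ |(inner ℝ w e' : ℝ)| := by
          rw [hkey]
          calc t * (2/3) = (2/3) * t := by ring
            _ ≤ ‖e''‖⁻¹ * |(inner ℝ w e'' : ℝ)| := by
              apply mul_le_mul hinv habs (le_of_lt ht0) (by positivity)
        rw [hgoal, h1]
        have : c / 3 = t * (2/3) := by rw [ht]; ring
        rw [this]
        calc t * (2/3) * ‖v‖ = ‖v‖ * (t * (2/3)) := by ring
          _ ≤ ‖v‖ * |(inner ℝ w e' : ℝ)| :=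
            mul_le_mul_of_nonneg_left h2 (norm_nonneg v)
      · -- v ∈ F
        rw [hgoal, hkey]
        have h1 := hFe'' v hvF
        calc c / 3 * ‖v‖ = (2/3) * (t * ‖v‖) := by rw [ht]; ring
          _ ≤ ‖e''‖⁻¹ * |(inner ℝ v e'' : ℝ)| := by
            apply mul_le_mul hinv h1 (by positivity) (by positivity)

/-- Lemma 4.4, inequality (4.5): quantitative extremal direction for a finite
collection of distinct points, with a constant depending only on M and n. -/
theorem stmt_2 (M n : ℕ) (hM : 2 ≤ M) :
    ∃ D : ℝ, 0 < D ∧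
      ∀ x : Fin M → EuclideanSpace ℝ (Fin n), Function.Injective x →
        ∃ (i : Fin M) (e : EuclideanSpace ℝ (Fin n)), ‖e‖ = 1 ∧
          ∀ j, j ≠ i → (1 / D) * ‖x j - x i‖ ≤ (inner ℝ (x j - x i) e : ℝ) := by
  classical
  rcases Nat.eq_zero_or_pos n with hn | hn
  · -- dimension 0: no injective map from Fin M, vacuous
    refine ⟨1, one_pos, ?_⟩
    intro x hx
    exfalso
    subst hn
    have h01 : (⟨0, by omega⟩ : Fin M) ≠ (⟨1, by omega⟩ : Fin M) := by
      simp [Fin.ext_iff]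
    apply h01
    apply hx
    ext i
    exact i.elim0
  · refine ⟨3 ^ (M * M), by positivity, ?_⟩
    intro x hx
    set F : Finset (EuclideanSpace ℝ (Fin n)) :=
      Finset.image (fun p : Fin M × Fin M => x p.1 - x p.2) Finset.univ with hF
    have hcard : F.card ≤ M * M := by
      calc F.card ≤ (Finset.univ : Finset (Fin M × Fin M)).card := Finset.card_image_le
        _ = M * M := by simp [Finset.card_univ]
    have he₀ : ‖(EuclideanSpace.single (⟨0, hn⟩ : Fin n) (1:ℝ))‖ = 1 := by
      rw [EuclideanSpace.norm_single, norm_one]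
    obtain ⟨e, he, hgood⟩ := exists_good_dir _ he₀ F
    obtain ⟨i, _, hi⟩ := Finset.exists_min_image (Finset.univ : Finset (Fin M))
      (fun j => (inner ℝ (x j) e : ℝ)) ⟨⟨0, by omega⟩, Finset.mem_univ _⟩
    refine ⟨i, e, he, ?_⟩
    intro j hj
    have hnonneg : 0 ≤ (inner ℝ (x j - x i) e : ℝ) := by
      rw [inner_sub_left]
      have := hi j (Finset.mem_univ j)
      simpa using sub_nonneg.2 this
    have hmem : x j - x i ∈ F := by
      rw [hF]
      exact Finset.mem_image.2 ⟨(j, i), Finset.mem_univ _, rfl⟩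
    have hbound := hgood _ hmem
    rw [abs_of_nonneg hnonneg] at hbound
    have hmono : (1 / (3:ℝ) ^ (M * M)) ≤ (1/3 : ℝ) ^ F.card := by
      have h1 : (1/3 : ℝ) ^ (M * M) ≤ (1/3 : ℝ) ^ F.card :=
        pow_le_pow_of_le_one (by norm_num) (by norm_num) hcard
      have h2 : (1 / (3:ℝ) ^ (M * M)) = (1/3 : ℝ) ^ (M * M) := by
        rw [div_pow, one_pow]
      linarith
    calc (1 / (3:ℝ) ^ (M * M)) * ‖x j - x i‖
        ≤ (1/3 : ℝ) ^ F.card * ‖x j - x i‖ :=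
          mul_le_mul_of_nonneg_right hmono (norm_nonneg _)
      _ ≤ (inner ℝ (x j - x i) e : ℝ) := hbound
end

section
/- Suppose P = {x₁, …, x_M} ⊂ ℝⁿ are distinct points with pairwise separation |xᵢ − xⱼ| ≥ L for i ≠ j, and suppose y ∈ P and a unit vector e satisfy (x − y) · e ≥ (1/D)|x − y| for all x ∈ P \ {y}, where D ≥ 1. Then for every z with |z − y| ≤ L/(2D) and every x ∈ P \ {y}, one has (x − z) · e ≥ (1/D₂)|x − z|, where D₂ = 2D(1 + 1/(2D)). -/
/-- Lemma 4.4, inequality (4.6): the cone condition persists in a neighborhood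
of the extremal center, quantitatively. -/
theorem stmt_4 (n M : ℕ) (x : Fin M → EuclideanSpace ℝ (Fin n))
    (L D : ℝ) (hL : 0 < L) (hD : 1 ≤ D)
    (hsep : ∀ i j, i ≠ j → L ≤ ‖x i - x j‖)
    (i₀ : Fin M) (e : EuclideanSpace ℝ (Fin n)) (he : ‖e‖ = 1)
    (hcone : ∀ j, j ≠ i₀ → (1 / D) * ‖x j - x i₀‖ ≤ (inner ℝ (x j - x i₀) e : ℝ)) :
    ∀ z : EuclideanSpace ℝ (Fin n), ‖z - x i₀‖ ≤ L / (2 * D) →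
      ∀ j, j ≠ i₀ →
        (1 / (2 * D * (1 + 1 / (2 * D)))) * ‖x j - z‖ ≤ (inner ℝ (x j - z) e : ℝ) := by
  intro z hz j hj
  have hD0 : (0:ℝ) < D := lt_of_lt_of_le one_pos hD
  set a := x j - x i₀ with ha
  set w := z - x i₀ with hw
  have hxz : x j - z = a - w := by simp [ha, hw]
  have h1 : (1 / D) * ‖a‖ ≤ (inner ℝ a e : ℝ) := hcone j hj
  have h2 : (inner ℝ w e : ℝ) ≤ ‖w‖ := by
    calc (inner ℝ w e : ℝ) ≤ ‖w‖ * ‖e‖ := real_inner_le_norm w e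
    _ = ‖w‖ := by rw [he, mul_one]
  have h3 : ‖a - w‖ ≤ ‖a‖ + ‖w‖ := norm_sub_le a w
  have h4 : L ≤ ‖a‖ := hsep j i₀ hj
  have h5 : ‖w‖ ≤ L / (2 * D) := hz
  have hsplit : (inner ℝ (a - w) e : ℝ) = inner ℝ a e - inner ℝ w e := inner_sub_left a w e
  rw [hxz, hsplit]
  have hLD : L / (2 * D) ≤ ‖a‖ / (2 * D) := by
    apply div_le_div_of_nonneg_right h4 (by positivity)
  have hinner : ‖a‖ / (2 * D) ≤ (inner ℝ a e : ℝ) - inner ℝ w e := by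
    have : (1 / D) * ‖a‖ - ‖a‖ / (2 * D) = ‖a‖ / (2 * D) := by
      field_simp; ring
    linarith [h5.trans hLD]
  have hnorm : ‖a - w‖ ≤ ‖a‖ * (2 * D + 1) / (2 * D) := by
    have : ‖a‖ + ‖a‖ / (2 * D) = ‖a‖ * (2 * D + 1) / (2 * D) := by
      field_simp
    linarith [h5.trans hLD]
  have hden : (1 / (2 * D * (1 + 1 / (2 * D)))) = 1 / (2 * D + 1) := by
    field_simp
  rw [hden]
  have h2D1 : (0:ℝ) < 2 * D + 1 := by linarith
  calc (1 / (2 * D + 1)) * ‖a - w‖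
      ≤ (1 / (2 * D + 1)) * (‖a‖ * (2 * D + 1) / (2 * D)) := by
        apply mul_le_mul_of_nonneg_left hnorm (by positivity)
    _ = ‖a‖ / (2 * D) := by field_simp
    _ ≤ (inner ℝ a e : ℝ) - inner ℝ w e := hinner
end

section
/- Let x, y ∈ ℝⁿ with |y| < |x|, write y = (ỹ, yₙ) ∈ ℝⁿ⁻¹ × ℝ, and let eₙ be the n-th standard basis vector. Then |y − |x| eₙ| + |y| ≥ |ỹ|²/(2|y|) + |x| (with the convention that the inequality is interpreted for y ≠ 0). -/
/-- The elementary inequality (4.10): |y − |x|eₙ| + |y| ≥ |ỹ|²/(2|y|) + |x|. -/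
theorem stmt_5 (n : ℕ) (x y : EuclideanSpace ℝ (Fin (n + 1)))
    (hy : y ≠ 0) (hxy : ‖y‖ < ‖x‖) :
    (∑ i : Fin n, (y (Fin.castSucc i))^2) / (2 * ‖y‖) + ‖x‖ ≤
      ‖y - ‖x‖ • EuclideanSpace.single (Fin.last n) (1 : ℝ)‖ + ‖y‖ := by
  have norm_sq : ∀ v : EuclideanSpace ℝ (Fin (n + 1)), ‖v‖ ^ 2 = ∑ i, (v i) ^ 2 := by
    intro v
    rw [EuclideanSpace.norm_eq, Real.sq_sqrt (by positivity)]
    simp [sq_abs]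
  set r := ‖x‖ with hr
  set s := ‖y‖ with hs
  set t := y (Fin.last n) with ht
  set A := ∑ i : Fin n, (y (Fin.castSucc i)) ^ 2 with hA
  have hspos : 0 < s := norm_pos_iff.mpr hy
  have hAnn : 0 ≤ A := Finset.sum_nonneg fun i _ => sq_nonneg _
  have hs2 : s ^ 2 = A + t ^ 2 := by
    rw [hs, norm_sq, Fin.sum_univ_castSucc]
  have hN : ‖y - r • EuclideanSpace.single (Fin.last n) (1 : ℝ)‖ ^ 2 = A + (t - r) ^ 2 := by
    rw [norm_sq, Fin.sum_univ_castSucc]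
    congr 1
    · apply Finset.sum_congr rfl
      intro i _
      have : (Fin.castSucc i : Fin (n+1)) ≠ Fin.last n := (Fin.castSucc_lt_last i).ne
      simp [PiLp.sub_apply, PiLp.smul_apply, EuclideanSpace.single_apply, this]
    · simp [PiLp.sub_apply, PiLp.smul_apply, EuclideanSpace.single_apply, ht]
  set N := ‖y - r • EuclideanSpace.single (Fin.last n) (1 : ℝ)‖ with hNdef
  have hNnn : 0 ≤ N := norm_nonneg _
  have hts : t ≤ s := by nlinarith [hs2, hAnn]
  have hts' : -s ≤ t := by nlinarith [hs2, hAnn]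
  have key : (A / (2 * s) + r - s) ^ 2 ≤ N ^ 2 := by
    rw [hN]
    have h1 : A = s ^ 2 - t ^ 2 := by linarith
    rw [h1]
    rw [div_add' _ _ _ (by positivity), div_sub' (by positivity), div_pow,
      div_le_iff₀ (by positivity)]
    nlinarith [mul_nonneg (mul_nonneg (sub_nonneg.2 hts) (sub_nonneg.2 hts)) (le_of_lt (hspos.trans hxy)),
      mul_nonneg (sub_nonneg.2 hts) (mul_nonneg (by linarith : (0:ℝ) ≤ s + t) (by nlinarith : (0:ℝ) ≤ 3 * s^2 + t^2)),
      sq_nonneg (s - t), sq_nonneg (s + t), hspos, hxy]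
  have hb : 0 ≤ A / (2 * s) + r - s := by
    have : 0 ≤ A / (2 * s) := by positivity
    linarith
  have : A / (2 * s) + r - s ≤ N := by
    nlinarith [key, hNnn, hb]
  linarith
end

section
/- Let Q be a continuous symmetric bilinear form on a real Hilbert space H and suppose there exists v ∈ H with Q(v, v) < 0 and that Q(φ, φ) ≥ 0 for all φ in a closed hyperplane K = {φ : ℓ(φ) = 0} for some nonzero continuous linear functional ℓ. Then the maximal dimension of a subspace of H on which Q is negative definite equals 1. -/
/-- A continuous symmetric bilinear form that is nonnegative on a closed
hyperplane and negative somewhere has a one-dimensional maximal negative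
subspace. -/
theorem stmt_15 {H : Type*} [NormedAddCommGroup H] [InnerProductSpace ℝ H]
    [CompleteSpace H] (Q : H →L[ℝ] H →L[ℝ] ℝ)
    (hsymm : ∀ x y : H, Q x y = Q y x)
    (ℓ : H →L[ℝ] ℝ) (hℓ : ℓ ≠ 0)
    (hK : ∀ φ : H, ℓ φ = 0 → 0 ≤ Q φ φ)
    (v : H) (hv : Q v v < 0) :
    (∃ S : Submodule ℝ H, Module.rank ℝ S = 1 ∧
        ∀ x ∈ S, x ≠ 0 → Q x x < 0) ∧
      ∀ S : Submodule ℝ H, (∀ x ∈ S, x ≠ 0 → Q x x < 0) →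
        Module.rank ℝ S ≤ 1 := by
  have hv0 : v ≠ 0 := by
    rintro rfl
    simp at hv
  constructor
  · refine ⟨Submodule.span ℝ {v}, ?_, ?_⟩
    · rw [rank_submodule_eq_one_iff]
      exact ⟨v, Submodule.mem_span_singleton_self v, hv0, le_rfl⟩
    · intro x hx hx0
      obtain ⟨c, rfl⟩ := Submodule.mem_span_singleton.mp hx
      have hc : c ≠ 0 := by
        rintro rfl; simp at hx0
      have : Q (c • v) (c • v) = c * c * Q v v := by
        simp [mul_assoc]
      rw [this]
      exact mul_neg_of_pos_of_neg (mul_self_pos.mpr hc) hv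
  · intro S hS
    -- key: for x y ∈ S, ℓ y • x - ℓ x • y = 0
    have key : ∀ x ∈ S, ∀ y ∈ S, ℓ y • x - ℓ x • y = 0 := by
      intro x hx y hy
      by_contra hz
      have hzm : ℓ y • x - ℓ x • y ∈ S :=
        S.sub_mem (S.smul_mem _ hx) (S.smul_mem _ hy)
      have hzl : ℓ (ℓ y • x - ℓ x • y) = 0 := by
        simp [mul_comm]
      exact absurd (hK _ hzl) (not_le.mpr (hS _ hzm hz))
    by_cases h : ∀ x ∈ S, ℓ x = 0
    · have : S = ⊥ := by
        rw [Submodule.eq_bot_iff]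
        intro x hx
        by_contra hx0
        exact absurd (hK x (h x hx)) (not_le.mpr (hS x hx hx0))
      rw [this]
      simp
    · push_neg at h
      obtain ⟨y, hy, hy0⟩ := h
      haveI : Module.Free ℝ S := Module.Free.of_divisionRing ℝ S
      rw [rank_submodule_le_one_iff']
      refine ⟨y, fun x hx => Submodule.mem_span_singleton.mpr ⟨(ℓ y)⁻¹ * ℓ x, ?_⟩⟩
      have := key x hx y hy
      have hxy : ℓ y • x = ℓ x • y := by linear_combination (norm := module) this
      rw [mul_smul, ← hxy, inv_smul_smul₀ hy0]
end

section
/- Let m > 0 and C ≥ 1, and suppose w : [r₀, ∞) → (0, ∞) is C² with (1/C) w(r) ≤ w''(r) ≤ C w(r) for all r ≥ r₀ and w(r) ≤ C e^{−r/m} for all r ≥ r₀. Then −w'(r) > 0 for all r ≥ r₀ and there is a constant C' such that (1/C') e^{−κ₂ r} ≤ −w'(r), for suitable κ₂ > 0; moreover −w'(r) ≤ ∫_r^∞ w''(s) ds ≤ C ∫_r^∞ w(s) ds ≤ C² m e^{−r/m}. -/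
open Set Filter

/-- Integration step in the proof of Proposition 2.1: if w > 0 decays
exponentially and w'' is comparable to w, then −w' is positive and comparable
to exponentials. -/
theorem stmt_18 (m C r₀ : ℝ) (hm : 0 < m) (hC : 1 ≤ C)
    (w : ℝ → ℝ) (hw : ContDiffOn ℝ 2 w (Set.Ici r₀))
    (hpos : ∀ r, r₀ ≤ r → 0 < w r)
    (hcomp : ∀ r, r₀ ≤ r →
      (1 / C) * w r ≤ deriv (deriv w) r ∧ deriv (deriv w) r ≤ C * w r)
    (hdecay : ∀ r, r₀ ≤ r → w r ≤ C * Real.exp (-r / m)) :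
    (∀ r, r₀ ≤ r → 0 < -deriv w r) ∧
      ∃ C' : ℝ, 0 < C' ∧ ∃ κ₂ : ℝ, 0 < κ₂ ∧
        ∀ r, r₀ ≤ r →
          (1 / C') * Real.exp (-κ₂ * r) ≤ -deriv w r ∧
            -deriv w r ≤ C ^ 2 * m * Real.exp (-r / m) := by
  have hC0 : (0:ℝ) < C := lt_of_lt_of_le one_pos hC
  set u := deriv w with hu
  set v := deriv u with hv
  -- u is (two-sidedly) differentiable at every point of [r₀, ∞)
  have hdu : ∀ r, r₀ ≤ r → DifferentiableAt ℝ u r := by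
    intro r hr
    by_contra h
    have h0 : v r = 0 := by rw [hv]; exact deriv_zero_of_not_differentiableAt h
    have h1 := (hcomp r hr).1
    have h2 := hpos r hr
    rw [h0] at h1
    nlinarith [one_div_pos.mpr hC0]
  have hderiv_u : ∀ r, r₀ ≤ r → HasDerivAt u (v r) r := fun r hr => (hdu r hr).hasDerivAt
  have hu_cont : ContinuousOn u (Set.Ici r₀) :=
    fun r hr => ((hdu r hr).continuousAt).continuousWithinAt
  have hw_cont : ContinuousOn w (Set.Ici r₀) := hw.continuousOn
  have hderiv_w : ∀ r, r₀ < r → HasDerivAt w (u r) r := by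
    intro r hr
    have hnb : Set.Ici r₀ ∈ nhds r := Ici_mem_nhds hr
    have h2 : ContDiffAt ℝ 2 w r := hw.contDiffAt hnb
    exact (h2.differentiableAt (by norm_num)).hasDerivAt
  -- u is strictly monotone on [r₀, ∞)
  have husm : StrictMonoOn u (Set.Ici r₀) := by
    apply strictMonoOn_of_deriv_pos (convex_Ici r₀) hu_cont
    intro x hx
    rw [interior_Ici] at hx
    have hx' : r₀ ≤ x := le_of_lt hx
    rw [← hv]
    have h1 := (hcomp x hx').1
    nlinarith [hpos x hx', one_div_pos.mpr hC0]
  -- u < 0 on [r₀, ∞)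
  have hneg : ∀ r, r₀ ≤ r → u r < 0 := by
    intro a ha
    by_contra h
    push_neg at h
    have ha1 : r₀ ≤ a + 1 := by linarith
    set δ := u (a + 1) with hδdef
    have hδ : 0 < δ :=
      lt_of_le_of_lt h (husm (mem_Ici.mpr ha) (mem_Ici.mpr ha1) (by linarith))
    set M := C * Real.exp (-(a + 1) / m) with hM
    have hM0 : 0 < M := by positivity
    set R := a + 1 + M / δ + 1 with hR
    clear_value δ M R
    have hRge : a + 1 ≤ R := by
      have : 0 ≤ M / δ := le_of_lt (div_pos hM0 hδ)
      linarith
    have hmono : MonotoneOn (fun x => w x - δ * x) (Set.Ici (a + 1)) := by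
      apply monotoneOn_of_deriv_nonneg (convex_Ici _)
      · exact (hw_cont.mono (Ici_subset_Ici.mpr ha1)).sub
          ((continuous_const.mul continuous_id).continuousOn)
      · intro x hx
        rw [interior_Ici] at hx
        have hd : HasDerivAt (fun x => w x - δ * x) (u x - δ) x := by
          have h := (hderiv_w x (lt_of_le_of_lt ha1 hx)).sub ((hasDerivAt_id x).const_mul δ); simp only [mul_one] at h; exact h
        exact hd.differentiableAt.differentiableWithinAt
      · intro x hx
        rw [interior_Ici] at hx
        have hx0 : r₀ < x := lt_of_le_of_lt ha1 hx
        have hd : HasDerivAt (fun x => w x - δ * x) (u x - δ) x := by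
          have h := (hderiv_w x hx0).sub ((hasDerivAt_id x).const_mul δ); simp only [mul_one] at h; exact h
        rw [hd.deriv, sub_nonneg, hδdef]
        exact husm.monotoneOn (mem_Ici.mpr ha1) (mem_Ici.mpr hx0.le) hx.le
    have h1 := hmono (self_mem_Ici) (mem_Ici.mpr hRge) hRge
    simp only at h1
    have h2 : w R ≤ C * Real.exp (-R / m) := hdecay R (le_trans ha1 hRge)
    have h3 : Real.exp (-R / m) ≤ Real.exp (-(a + 1) / m) := by
      apply Real.exp_le_exp.mpr
      exact div_le_div_of_nonneg_right (by linarith) hm.le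
    have hmul : C * Real.exp (-R / m) ≤ M :=
      hM ▸ mul_le_mul_of_nonneg_left h3 (le_of_lt hC0)
    have hδR : δ * R - δ * (a + 1) = M + δ := by
      rw [hR]; field_simp; ring
    have hw1 := hpos (a + 1) ha1
    linarith
  -- upper bound
  have hub : ∀ r, r₀ ≤ r → -u r ≤ C ^ 2 * m * Real.exp (-r / m) := by
    intro r hr
    by_contra h
    push_neg at h
    set δ := -(u r + C ^ 2 * m * Real.exp (-r / m)) with hδdef
    clear_value δ
    have hδ : 0 < δ := by rw [hδdef]; linarith
    have hexp : ∀ x : ℝ, HasDerivAt (fun y => Real.exp (-y / m))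
        (Real.exp (-x / m) * (-1 / m)) x :=
      fun x => (((hasDerivAt_id x).neg.div_const m)).exp
    have hder : ∀ x, r₀ ≤ x → HasDerivAt (fun y => u y + C ^ 2 * m * Real.exp (-y / m))
        (v x + C ^ 2 * m * (Real.exp (-x / m) * (-1 / m))) x :=
      fun x hx => (hderiv_u x hx).add ((hexp x).const_mul (C ^ 2 * m))
    have hganti : AntitoneOn (fun x => u x + C ^ 2 * m * Real.exp (-x / m)) (Set.Ici r₀) := by
      apply antitoneOn_of_deriv_nonpos (convex_Ici _)
      · exact hu_cont.add (Continuous.continuousOn (by continuity))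
      · intro x hx
        rw [interior_Ici] at hx
        exact (hder x hx.le).differentiableAt.differentiableWithinAt
      · intro x hx
        rw [interior_Ici] at hx
        rw [(hder x hx.le).deriv]
        have h1 := (hcomp x hx.le).2
        have h2 := hdecay x hx.le
        have hmul := mul_le_mul_of_nonneg_left h2 (le_of_lt hC0)
        have hm' : m ≠ 0 := ne_of_gt hm
        have hrw : C ^ 2 * m * (Real.exp (-x / m) * (-1 / m)) =
            -(C ^ 2 * Real.exp (-x / m)) := by field_simp
        rw [hrw]
        nlinarith [Real.exp_pos (-x / m)]
    have hkey : ∀ R, r ≤ R → u R ≤ -δ := by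
      intro R hR
      have h1 := hganti (mem_Ici.mpr hr) (mem_Ici.mpr (le_trans hr hR)) hR
      simp only at h1
      have h2 : 0 ≤ C ^ 2 * m * Real.exp (-R / m) := by positivity
      rw [hδdef]
      linarith
    have hanti2 : AntitoneOn (fun x => w x + δ * x) (Set.Ici r) := by
      apply antitoneOn_of_deriv_nonpos (convex_Ici _)
      · exact (hw_cont.mono (Ici_subset_Ici.mpr hr)).add
          ((continuous_const.mul continuous_id).continuousOn)
      · intro x hx
        rw [interior_Ici] at hx
        have hd : HasDerivAt (fun x => w x + δ * x) (u x + δ) x := by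
          have h := (hderiv_w x (lt_of_le_of_lt hr hx)).add ((hasDerivAt_id x).const_mul δ); simp only [mul_one] at h; exact h
        exact hd.differentiableAt.differentiableWithinAt
      · intro x hx
        rw [interior_Ici] at hx
        have hd : HasDerivAt (fun x => w x + δ * x) (u x + δ) x := by
          have h := (hderiv_w x (lt_of_le_of_lt hr hx)).add ((hasDerivAt_id x).const_mul δ); simp only [mul_one] at h; exact h
        rw [hd.deriv]
        have := hkey x hx.le
        linarith
    set R := r + w r / δ + 1 with hRdef
    clear_value R
    have hRge : r ≤ R := by
      have : 0 ≤ w r / δ := le_of_lt (div_pos (hpos r hr) hδ)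
      linarith
    have h1 := hanti2 (self_mem_Ici) (mem_Ici.mpr hRge) hRge
    simp only at h1
    have h2 : 0 < w R := hpos R (le_trans hr hRge)
    have h3 : δ * R - δ * r = w r + δ := by
      rw [hRdef]; field_simp; ring
    linarith
  -- limits at infinity
  have htexp : Tendsto (fun x : ℝ => Real.exp (-x / m)) atTop (nhds 0) := by
    apply Real.tendsto_exp_atBot.comp
    exact Tendsto.atBot_div_const hm tendsto_neg_atTop_atBot
  have htw : Tendsto w atTop (nhds 0) := by
    have hupper : Tendsto (fun x => C * Real.exp (-x / m)) atTop (nhds 0) := by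
      simpa using htexp.const_mul C
    apply tendsto_of_tendsto_of_tendsto_of_le_of_le' tendsto_const_nhds hupper
    · filter_upwards [eventually_ge_atTop r₀] with x hx using (hpos x hx).le
    · filter_upwards [eventually_ge_atTop r₀] with x hx using hdecay x hx
  have htu : Tendsto u atTop (nhds 0) := by
    have hlower : Tendsto (fun x => -(C ^ 2 * m * Real.exp (-x / m))) atTop (nhds 0) := by
      simpa using (htexp.const_mul (C ^ 2 * m)).neg
    apply tendsto_of_tendsto_of_tendsto_of_le_of_le' hlower tendsto_const_nhds
    · filter_upwards [eventually_ge_atTop r₀] with x hx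
      have := hub x hx; linarith
    · filter_upwards [eventually_ge_atTop r₀] with x hx using (hneg x hx).le
  -- energy function
  have hGanti : AntitoneOn (fun x => C * u x ^ 2 - w x ^ 2) (Set.Ici r₀) := by
    apply antitoneOn_of_deriv_nonpos (convex_Ici _)
    · exact ((hu_cont.pow 2).const_smul C).congr (by intro x hx; simp [smul_eq_mul]) |>.sub
        (hw_cont.pow 2)
    · intro x hx
      rw [interior_Ici] at hx
      have hd : HasDerivAt (fun x => C * u x ^ 2 - w x ^ 2)
          (C * (2 * u x ^ 1 * v x) - 2 * w x ^ 1 * u x) x :=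
        (((hderiv_u x hx.le).pow 2).const_mul C).sub ((hderiv_w x hx).pow 2)
      exact hd.differentiableAt.differentiableWithinAt
    · intro x hx
      rw [interior_Ici] at hx
      have hd : HasDerivAt (fun x => C * u x ^ 2 - w x ^ 2)
          (C * (2 * u x ^ 1 * v x) - 2 * w x ^ 1 * u x) x :=
        (((hderiv_u x hx.le).pow 2).const_mul C).sub ((hderiv_w x hx).pow 2)
      rw [hd.deriv]
      have h1 := (hcomp x hx.le).1
      have h2 := hneg x hx.le
      have h4 : w x ≤ v x * C := by
        rw [one_div_mul_eq_div] at h1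
        exact (div_le_iff₀ hC0).mp h1
      have h5 : u x * (v x * C - w x) ≤ 0 :=
        mul_nonpos_of_nonpos_of_nonneg h2.le (by linarith)
      simp only [pow_one]
      nlinarith [h5]
  have hGtend : Tendsto (fun x => C * u x ^ 2 - w x ^ 2) atTop (nhds 0) := by
    have := ((htu.pow 2).const_mul C).sub (htw.pow 2)
    simpa using this
  have hG0 : ∀ r, r₀ ≤ r → 0 ≤ C * u r ^ 2 - w r ^ 2 := by
    intro r hr
    apply le_of_tendsto hGtend
    filter_upwards [eventually_ge_atTop r] with x hx
    exact hGanti (mem_Ici.mpr hr) (mem_Ici.mpr (le_trans hr hx)) hx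
  have hs0 : 0 < Real.sqrt C := Real.sqrt_pos.mpr hC0
  have hsq : Real.sqrt C ^ 2 = C := Real.sq_sqrt (le_of_lt hC0)
  have hwu : ∀ r, r₀ ≤ r → w r ≤ Real.sqrt C * (-u r) := by
    intro r hr
    have h0 := hG0 r hr
    have hA : 0 < Real.sqrt C * (-u r) := mul_pos hs0 (by linarith [hneg r hr])
    have hsqle : w r ^ 2 ≤ (Real.sqrt C * (-u r)) ^ 2 := by
      rw [mul_pow, hsq]
      nlinarith [h0]
    nlinarith [hpos r hr, hA, hsqle]
  -- growth of e^{κ x} (-u x)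
  set κ := C * Real.sqrt C with hκdef
  have hκ : 0 < κ := mul_pos hC0 hs0
  have hHder : ∀ x, r₀ ≤ x → HasDerivAt (fun y => Real.exp (κ * y) * (-u y))
      (κ * Real.exp (κ * x) * (-u x) + Real.exp (κ * x) * (-v x)) x := by
    intro x hx
    have h1 : HasDerivAt (fun y => Real.exp (κ * y)) (κ * Real.exp (κ * x)) x := by
      have := ((hasDerivAt_id x).const_mul κ).exp
      simpa [mul_comm] using this
    exact h1.mul (hderiv_u x hx).neg
  have hHmono : MonotoneOn (fun y => Real.exp (κ * y) * (-u y)) (Set.Ici r₀) := by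
    apply monotoneOn_of_deriv_nonneg (convex_Ici _)
    · exact ((Real.continuous_exp.comp (continuous_const.mul continuous_id)).continuousOn).mul
        hu_cont.neg
    · intro x hx
      rw [interior_Ici] at hx
      exact (hHder x hx.le).differentiableAt.differentiableWithinAt
    · intro x hx
      rw [interior_Ici] at hx
      rw [(hHder x hx.le).deriv]
      have h1 := (hcomp x hx.le).2
      have h2 := hwu x hx.le
      have h3 : v x ≤ κ * (-u x) := by
        calc v x ≤ C * w x := h1
          _ ≤ C * (Real.sqrt C * (-u x)) := mul_le_mul_of_nonneg_left h2 (le_of_lt hC0)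
          _ = κ * (-u x) := by rw [hκdef]; ring
      nlinarith [Real.exp_pos (κ * x), mul_nonneg (Real.exp_pos (κ * x)).le
        (by linarith : 0 ≤ κ * (-u x) - v x)]
  have hu0 : 0 < -u r₀ := neg_pos.mpr (hneg r₀ le_rfl)
  refine ⟨fun r hr => neg_pos.mpr (hneg r hr),
    (Real.exp (κ * r₀) * (-u r₀))⁻¹, inv_pos.mpr (mul_pos (Real.exp_pos _) hu0),
    κ, hκ, fun r hr => ⟨?_, hub r hr⟩⟩
  rw [one_div, inv_inv]
  have hH := hHmono (self_mem_Ici) (mem_Ici.mpr hr) hr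
  simp only at hH
  have he : (0:ℝ) < Real.exp (-κ * r) := Real.exp_pos _
  have h3 : Real.exp (κ * r) * Real.exp (-κ * r) = 1 := by
    rw [← Real.exp_add]
    have : κ * r + -κ * r = 0 := by ring
    rw [this, Real.exp_zero]
  calc Real.exp (κ * r₀) * (-u r₀) * Real.exp (-κ * r)
      ≤ Real.exp (κ * r) * (-u r) * Real.exp (-κ * r) :=
        mul_le_mul_of_nonneg_right hH he.le
    _ = -u r * (Real.exp (κ * r) * Real.exp (-κ * r)) := by ring
    _ = -u r := by rw [h3, mul_one]
end
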